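/- Every maximal isotropic subgroup meeting the factors trivially is the graph of an antisymplectic map: let X and Y be isomorphic finite abelian groups equipped with symplectic forms ω_X and ω_Y, and let Z be a maximal isotropic subgroup of X ⊕ Y (with respect to the form ω_X + ω_Y) such that Z ∩ (X ⊕ 0) = {0} and Z ∩ (0 ⊕ Y) = {0}. Then the projections π_X : Z → X and π_Y : Z → Y are bijective, the map π_Y ∘ π_X⁻¹ : X → Y is an antisymplectic group homomorphism, and Z is its graph. -/

import Mathlib

/-- A symplectic form on a finite abelian group, valued in ℚ/ℤ :
ℤ-bilinear, alternating and nondegenerate. -/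
structure IsSymplecticForm {X : Type*} [AddCommGroup X]
    (ω : X → X → AddCircle (1 : ℚ)) : Prop where
  add_left : ∀ x x' y : X, ω (x + x') y = ω x y + ω x' y
  add_right : ∀ x y y' : X, ω x (y + y') = ω x y + ω x y'
  alternating : ∀ x : X, ω x x = 0
  nondeg : ∀ x : X, (∀ y : X, ω x y = 0) → x = 0

/-- A subgroup is isotropic for `ω` if `ω` vanishes identically on it. -/
def IsIsotropic {G : Type*} [AddCommGroup G]
    (ω : G → G → AddCircle (1 : ℚ)) (H : AddSubgroup G) : Prop :=
  ∀ x ∈ H, ∀ y ∈ H, ω x y = 0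

/-- A maximal isotropic subgroup: isotropic and not properly contained in any
isotropic subgroup. -/
def IsMaximalIsotropic {G : Type*} [AddCommGroup G]
    (ω : G → G → AddCircle (1 : ℚ)) (H : AddSubgroup G) : Prop :=
  IsIsotropic ω H ∧ ∀ K : AddSubgroup G, IsIsotropic ω K → H ≤ K → K = H

open Multiplicative

/-- Any `n`-torsion element of `ℚ/ℤ` is an integer multiple of `1/n`. -/
lemma addCircle_key (n : ℕ) (hn : n ≠ 0) (a : AddCircle (1:ℚ)) (ha : n • a = 0) :
    ∃ m : ℤ, m • (((1:ℚ)/n : ℚ) : AddCircle (1:ℚ)) = a := by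
  obtain ⟨q, rfl⟩ := QuotientAddGroup.mk_surjective a
  have h1 : ((n • q : ℚ) : AddCircle (1:ℚ)) = 0 := by
    rw [AddCircle.coe_nsmul, ha]
  rw [AddCircle.coe_eq_zero_iff] at h1
  obtain ⟨m, hm⟩ := h1
  have hn' : (n : ℚ) ≠ 0 := Nat.cast_ne_zero.mpr hn
  have hmq : (m : ℚ) = n * q := by simpa [zsmul_eq_mul, nsmul_eq_mul] using hm
  have h2 : (m • ((1:ℚ)/n) : ℚ) = q := by
    rw [zsmul_eq_mul, hmq]; field_simp
  refine ⟨m, ?_⟩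
  rw [← AddCircle.coe_zsmul, h2]

/-- `ℚ/ℤ` (viewed multiplicatively) has enough roots of unity of every order. -/
instance addCircle_hasEnough (n : ℕ) [NeZero n] :
    HasEnoughRootsOfUnity (Multiplicative (AddCircle (1 : ℚ))) n := by
  haveI : Fact ((0:ℚ) < 1) := ⟨one_pos⟩
  set c : AddCircle (1:ℚ) := (((1:ℚ)/n : ℚ) : AddCircle (1:ℚ)) with hc
  have hord : addOrderOf c = n := AddCircle.addOrderOf_period_div (Nat.pos_of_ne_zero (NeZero.ne n))
  have hordm : orderOf (ofAdd c) = n := by rw [orderOf_ofAdd_eq_addOrderOf, hord]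
  have hnc : n • c = 0 := by rw [← hord]; exact addOrderOf_nsmul_eq_zero c
  constructor
  · exact ⟨ofAdd c, hordm ▸ IsPrimitiveRoot.orderOf (ofAdd c)⟩
  · set g : Multiplicative (AddCircle (1:ℚ)) := ofAdd c
    have hg : toUnits g ∈ rootsOfUnity n (Multiplicative (AddCircle (1:ℚ))) := by
      rw [mem_rootsOfUnity, ← map_pow, ← ofAdd_nsmul, hnc]
      simp
    refine ⟨⟨⟨toUnits g, hg⟩, fun x => ?_⟩⟩
    have hx : (x : (Multiplicative (AddCircle (1:ℚ)))ˣ) ^ n = 1 := (mem_rootsOfUnity _ _).mp x.2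
    set a : AddCircle (1:ℚ) := toAdd (toUnits.symm (x.1 : (Multiplicative (AddCircle (1:ℚ)))ˣ))
      with hadef
    have hna : n • a = 0 := by
      have h4 : (ofAdd (n • a)) = 1 := by
        rw [ofAdd_nsmul, hadef, ofAdd_toAdd, ← map_pow, hx, map_one]
      exact ofAdd.injective (h4.trans ofAdd_zero.symm)
    obtain ⟨m, hm⟩ := addCircle_key n (NeZero.ne n) a hna
    have hgm : (toUnits g) ^ m = x.1 := by
      rw [← map_zpow, ← ofAdd_zsmul, show m • c = a from hm, hadef, ofAdd_toAdd]
      simp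
    exact ⟨m, Subtype.ext (by push_cast; exact hgm)⟩

/-- A finite abelian group is (noncanonically) in bijection with its `ℚ/ℤ`-dual. -/
lemma dual_equiv (A : Type*) [AddCommGroup A] [Finite A] :
    Nonempty ((A →+ AddCircle (1 : ℚ)) ≃ A) := by
  obtain ⟨e⟩ := CommGroup.monoidHom_mulEquiv_of_hasEnoughRootsOfUnity (Multiplicative A)
    (Multiplicative (AddCircle (1:ℚ)))
  exact ⟨(AddMonoidHom.toMultiplicative.trans
    ((MulEquiv.monoidHomCongrRight (M := Multiplicative A)
      (toUnits (G := Multiplicative (AddCircle (1:ℚ))))).toEquiv.trans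
    (e.toEquiv.trans Multiplicative.ofAdd.symm)))⟩

section helpers

variable {G : Type*} [AddCommGroup G] {ω : G → G → AddCircle (1 : ℚ)}

lemma omega_zero_left (hl : ∀ x x' y : G, ω (x + x') y = ω x y + ω x' y) (y : G) :
    ω 0 y = 0 := by
  have h := hl 0 0 y
  rw [add_zero] at h
  exact (left_eq_add.mp h)

lemma omega_zsmul_left (hl : ∀ x x' y : G, ω (x + x') y = ω x y + ω x' y) (m : ℤ) (x y : G) :
    ω (m • x) y = m • ω x y :=
  map_zsmul (AddMonoidHom.mk' (fun x => ω x y) (fun a b => hl a b y)) m x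

lemma omega_zsmul_right (hr : ∀ x y y' : G, ω x (y + y') = ω x y + ω x y') (m : ℤ) (x y : G) :
    ω x (m • y) = m • ω x y :=
  map_zsmul (AddMonoidHom.mk' (fun z => ω x z) (hr x)) m y

lemma omega_skew (hl : ∀ x x' y : G, ω (x + x') y = ω x y + ω x' y)
    (hr : ∀ x y y' : G, ω x (y + y') = ω x y + ω x y')
    (ha : ∀ x : G, ω x x = 0) (x y : G) : ω y x = - ω x y := by
  have h := ha (x + y)
  rw [hl, hr, hr, ha, ha, zero_add, add_zero] at h
  exact eq_neg_of_add_eq_zero_right h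

end helpers

/-- Every maximal isotropic subgroup of `X ⊕ Y` meeting both factors trivially
is the graph of an antisymplectic map: the two projections from `Z` are
bijective and `Z` is the graph of an antisymplectic homomorphism
`π_Y ∘ π_X⁻¹ : X → Y`. -/
theorem maximal_isotropic_is_graph_of_antisymplectic
    {X Y : Type*} [AddCommGroup X] [AddCommGroup Y] [Fintype X] [Fintype Y]
    (hiso : Nonempty (X ≃+ Y))
    (ωX : X → X → AddCircle (1 : ℚ)) (ωY : Y → Y → AddCircle (1 : ℚ))
    (hωX : IsSymplecticForm ωX) (hωY : IsSymplecticForm ωY)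
    (Z : AddSubgroup (X × Y))
    (hZ : IsMaximalIsotropic (fun p q : X × Y => ωX p.1 q.1 + ωY p.2 q.2) Z)
    (hZX : Z ⊓ AddSubgroup.prod ⊤ ⊥ = ⊥)
    (hZY : Z ⊓ AddSubgroup.prod ⊥ ⊤ = ⊥) :
    Function.Bijective (fun z : Z => (z : X × Y).1) ∧
    Function.Bijective (fun z : Z => (z : X × Y).2) ∧
    ∃ f : X →+ Y,
      (∀ x x' : X, ωY (f x) (f x') = - ωX x x') ∧
      (∀ x : X, f x = ((Function.invFun (fun z : Z => (z : X × Y).1) x : Z) : X × Y).2) ∧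
      (∀ p : X × Y, p ∈ Z ↔ f p.1 = p.2) := by
  classical
  set ω : (X × Y) → (X × Y) → AddCircle (1:ℚ) :=
    fun p q => ωX p.1 q.1 + ωY p.2 q.2 with hω
  have hl : ∀ p p' q : X × Y, ω (p + p') q = ω p q + ω p' q := by
    intro p p' q
    simp only [hω, Prod.fst_add, Prod.snd_add, hωX.add_left, hωY.add_left]
    abel
  have hr : ∀ p q q' : X × Y, ω p (q + q') = ω p q + ω p q' := by
    intro p q q'
    simp only [hω, Prod.fst_add, Prod.snd_add, hωX.add_right, hωY.add_right]
    abel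
  have halt : ∀ p : X × Y, ω p p = 0 := by
    intro p; simp only [hω, hωX.alternating, hωY.alternating, add_zero]
  -- maximal isotropic subgroups contain their annihilator
  have hperp : ∀ g : X × Y, (∀ z ∈ Z, ω g z = 0) → g ∈ Z := by
    intro g hg
    have hK : IsIsotropic ω (Z ⊔ AddSubgroup.zmultiples g) := by
      intro u hu v hv
      rw [AddSubgroup.mem_sup] at hu hv
      obtain ⟨z1, hz1, w1, hw1, rfl⟩ := hu
      obtain ⟨z2, hz2, w2, hw2, rfl⟩ := hv
      rw [AddSubgroup.mem_zmultiples_iff] at hw1 hw2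
      obtain ⟨m1, rfl⟩ := hw1
      obtain ⟨m2, rfl⟩ := hw2
      have e1 : ω z1 z2 = 0 := hZ.1 z1 hz1 z2 hz2
      have e2 : ω g z1 = 0 := hg z1 hz1
      have e3 : ω g z2 = 0 := hg z2 hz2
      have eA : ω z1 (m2 • g) = 0 := by
        rw [omega_zsmul_right hr, omega_skew hl hr halt g z1, e2]; simp
      have eB : ω (m1 • g) z2 = 0 := by
        rw [omega_zsmul_left hl, e3]; simp
      have eC : ω (m1 • g) (m2 • g) = 0 := by
        rw [omega_zsmul_left hl, omega_zsmul_right hr, halt]; simp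
      rw [hl, hr, hr, e1, eA, eB, eC]
      simp
    have hKZ := hZ.2 _ hK le_sup_left
    rw [← hKZ]
    exact (le_sup_right : AddSubgroup.zmultiples g ≤ _) (AddSubgroup.mem_zmultiples g)
  -- injectivity of the projections
  have injX : Function.Injective (fun z : Z => (z : X × Y).1) := by
    intro z z' h
    have hmem : ((z : X × Y) - z') ∈ Z ⊓ AddSubgroup.prod ⊥ ⊤ :=
      AddSubgroup.mem_inf.mpr ⟨sub_mem z.2 z'.2,
        AddSubgroup.mem_prod.mpr ⟨AddSubgroup.mem_bot.mpr (by simpa [sub_eq_zero] using h),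
          trivial⟩⟩
    rw [hZY, AddSubgroup.mem_bot] at hmem
    exact Subtype.ext (sub_eq_zero.mp hmem)
  have injY : Function.Injective (fun z : Z => (z : X × Y).2) := by
    intro z z' h
    have hmem : ((z : X × Y) - z') ∈ Z ⊓ AddSubgroup.prod ⊤ ⊥ :=
      AddSubgroup.mem_inf.mpr ⟨sub_mem z.2 z'.2,
        AddSubgroup.mem_prod.mpr ⟨trivial,
          AddSubgroup.mem_bot.mpr (by simpa [sub_eq_zero] using h)⟩⟩
    rw [hZX, AddSubgroup.mem_bot] at hmem
    exact Subtype.ext (sub_eq_zero.mp hmem)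
  -- the pairing of Y against Z is injective
  let Ψ : Y →+ (Z →+ AddCircle (1:ℚ)) :=
    AddMonoidHom.mk'
      (fun y => AddMonoidHom.mk' (fun z : Z => ωY y ((z : X × Y)).2)
        (fun a b => hωY.add_right y (a : X × Y).2 (b : X × Y).2))
      (fun y y' => AddMonoidHom.ext fun z => by
        simpa using hωY.add_left y y' ((z : X × Y)).2)
  have hΨinj : Function.Injective Ψ := by
    rw [injective_iff_map_eq_zero]
    intro y hy
    have h0 : ∀ z : Z, ωY y ((z : X × Y)).2 = 0 := fun z => by
      simpa [Ψ] using DFunLike.congr_fun hy z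
    have hyZ : ((0 : X), y) ∈ Z := by
      refine hperp _ (fun z hz => ?_)
      have h6 := h0 ⟨z, hz⟩
      simp only [hω]
      rw [omega_zero_left hωX.add_left (ω := ωX)]
      simpa using h6
    have hmem : ((0 : X), y) ∈ Z ⊓ AddSubgroup.prod ⊥ ⊤ :=
      AddSubgroup.mem_inf.mpr ⟨hyZ, AddSubgroup.mem_prod.mpr ⟨AddSubgroup.mem_bot.mpr rfl,
        trivial⟩⟩
    rw [hZY, AddSubgroup.mem_bot, Prod.mk_eq_zero] at hmem
    exact hmem.2
  -- counting
  obtain ⟨edual⟩ := dual_equiv Z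
  haveI : Finite (Z →+ AddCircle (1:ℚ)) := Finite.of_equiv _ edual.symm
  have c1 : Nat.card Y ≤ Nat.card (Z →+ AddCircle (1:ℚ)) :=
    Nat.card_le_card_of_injective _ hΨinj
  have c2 : Nat.card (Z →+ AddCircle (1:ℚ)) = Nat.card Z := Nat.card_congr edual
  have c3 : Nat.card Z ≤ Nat.card X :=
    Nat.card_le_card_of_injective _ injX
  have c4 : Nat.card X = Nat.card Y := Nat.card_congr hiso.some.toEquiv
  have cZX : Nat.card Z = Nat.card X := le_antisymm c3 (by omega)
  have cZY : Nat.card Z = Nat.card Y := by omega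
  have bijX : Function.Bijective (fun z : Z => (z : X × Y).1) :=
    (Nat.bijective_iff_injective_and_card _).mpr ⟨injX, cZX⟩
  have bijY : Function.Bijective (fun z : Z => (z : X × Y).2) :=
    (Nat.bijective_iff_injective_and_card _).mpr ⟨injY, cZY⟩
  -- the antisymplectic map
  let πX' : Z →+ X := (AddMonoidHom.fst X Y).comp Z.subtype
  have bijX' : Function.Bijective πX' := bijX
  let eX : Z ≃+ X := AddEquiv.ofBijective πX' bijX'
  let f : X →+ Y := ((AddMonoidHom.snd X Y).comp Z.subtype).comp eX.symm.toAddMonoidHom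
  have hfst : ∀ x : X, ((eX.symm x : Z) : X × Y).1 = x := fun x => eX.apply_symm_apply x
  have hkey : ∀ x : X, ((eX.symm x : Z) : X × Y) = (x, f x) := fun x =>
    Prod.ext (hfst x) rfl
  have hgraph : ∀ p : X × Y, p ∈ Z ↔ f p.1 = p.2 := by
    intro p
    constructor
    · intro hp
      have h5 : eX.symm (((⟨p, hp⟩ : Z) : X × Y).1) = ⟨p, hp⟩ :=
        eX.symm_apply_apply ⟨p, hp⟩
      have h6 := congrArg (fun z : Z => ((z : X × Y)).2) h5
      exact h6
    · intro hfp
      have hmem : ((p.1, f p.1) : X × Y) ∈ Z := by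
        rw [← hkey p.1]
        exact (eX.symm p.1).2
      have h7 : p = (p.1, f p.1) := by rw [hfp]
      rw [h7]
      exact hmem
  have hanti : ∀ x x' : X, ωY (f x) (f x') = - ωX x x' := by
    intro x x'
    have h1 : ((x, f x) : X × Y) ∈ Z := (hgraph _).mpr rfl
    have h2 : ((x', f x') : X × Y) ∈ Z := (hgraph _).mpr rfl
    have h3 : ωX x x' + ωY (f x) (f x') = 0 := hZ.1 _ h1 _ h2
    exact eq_neg_of_add_eq_zero_right h3
  haveI : Nonempty Z := ⟨0⟩
  have hinv : ∀ x : X,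
      f x = ((Function.invFun (fun z : Z => (z : X × Y).1) x : Z) : X × Y).2 := by
    intro x
    have hx : ((Function.invFun (fun z : Z => (z : X × Y).1) x : Z) : X × Y).1 = x :=
      Function.invFun_eq (f := fun z : Z => (z : X × Y).1) ⟨eX.symm x, hfst x⟩
    have h8 := (hgraph ((Function.invFun (fun z : Z => (z : X × Y).1) x : Z) : X × Y)).mp
      (Function.invFun (fun z : Z => (z : X × Y).1) x).2
    rw [hx] at h8
    exact h8
  exact ⟨bijX, bijY, f, hanti, hinv, hgraph⟩
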